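/- For any permutation π in the symmetric group S_n, the number of up-down runs of π equals the length of the longest alternating subsequence of π. (An up-down run of π is either a maximal monotone consecutive subsequence (birun) of π, or the single entry π(1) if π(1)>π(2).) -/

import Mathlib

open Finset

section Defs
variable {α : Type*} [LinearOrder α]

/-- Number of descents of a list. -/
def descentsCount : List α → ℕ
  | a :: b :: l => (if b < a then 1 else 0) + descentsCount (b :: l)
  | _ => 0

/-- Number of (interior) peaks of a list. -/
def peaksCount : List α → ℕ
  | a :: b :: c :: l => (if a < b ∧ c < b then 1 else 0) + peaksCount (b :: c :: l)
  | _ => 0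

/-- 1 if the list starts with a descent, else 0. -/
def initDesc : List α → ℕ
  | a :: b :: _ => if b < a then 1 else 0
  | _ => 0

/-- Number of left peaks of a list. -/
def leftPeaksCount (l : List α) : ℕ := initDesc l + peaksCount l

/-- Number of interior direction changes. -/
def turnsCount : List α → ℕ
  | a :: b :: c :: l => (if (a < b ∧ c < b) ∨ (b < a ∧ b < c) then 1 else 0) + turnsCount (b :: c :: l)
  | _ => 0

/-- Number of biruns (maximal monotone consecutive subsequences). -/
def birunsCount (l : List α) : ℕ := if l = [] then 0 else turnsCount l + 1

/-- Number of up-down runs. -/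
def udrCount (l : List α) : ℕ := initDesc l + birunsCount l

/-- `IsAltFrom true l` : the list `l` alternates starting with a descent. -/
def IsAltFrom : Bool → List α → Prop
  | _, [] => True
  | _, [_] => True
  | true, a :: b :: l => b < a ∧ IsAltFrom false (b :: l)
  | false, a :: b :: l => a < b ∧ IsAltFrom true (b :: l)

end Defs

def desP {n : ℕ} (π : Equiv.Perm (Fin n)) : ℕ := descentsCount (List.ofFn ⇑π)
def pkP {n : ℕ} (π : Equiv.Perm (Fin n)) : ℕ := peaksCount (List.ofFn ⇑π)
def lpkP {n : ℕ} (π : Equiv.Perm (Fin n)) : ℕ := leftPeaksCount (List.ofFn ⇑π)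
def brP {n : ℕ} (π : Equiv.Perm (Fin n)) : ℕ := birunsCount (List.ofFn ⇑π)
def udrP {n : ℕ} (π : Equiv.Perm (Fin n)) : ℕ := udrCount (List.ofFn ⇑π)
def AltP {n : ℕ} (π : Equiv.Perm (Fin n)) : Prop := IsAltFrom true (List.ofFn ⇑π)

def fixedCount {n : ℕ} (π : Equiv.Perm (Fin n)) : ℕ :=
  (Finset.univ.filter fun x => π x = x).card
def cycleCount {n : ℕ} (π : Equiv.Perm (Fin n)) : ℕ := π.cycleType.card + fixedCount π
def oddCycleCount {n : ℕ} (π : Equiv.Perm (Fin n)) : ℕ :=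
  (π.cycleType.filter fun l => l % 2 = 1).card + fixedCount π

noncomputable def stirC (n k : ℕ) : ℕ := Nat.card {π : Equiv.Perm (Fin n) // cycleCount π = k}
noncomputable def dOdd (n k : ℕ) : ℕ :=
  Nat.card {π : Equiv.Perm (Fin n) // cycleCount π = k ∧ ∀ l ∈ π.cycleType, l % 2 = 1}
noncomputable def eOdd (n k : ℕ) : ℕ := Nat.card {π : Equiv.Perm (Fin n) // oddCycleCount π = k}
noncomputable def fOdd (n k m : ℕ) : ℕ :=
  Nat.card {π : Equiv.Perm (Fin n) // oddCycleCount π = k ∧ cycleCount π = m}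

noncomputable def eulerE (k : ℕ) : ℕ := Nat.card {π : Equiv.Perm (Fin k) // AltP π}



section AuxAlt
variable {α : Type*} [LinearOrder α]

def initAsc : List α → ℕ
  | a :: b :: _ => if a < b then 1 else 0
  | _ => 0

def altSet (b : Bool) (l : List α) : Set ℕ :=
  {k | ∃ s : List α, s.Sublist l ∧ IsAltFrom b s ∧ s.length = k}

noncomputable def altM (b : Bool) (l : List α) : ℕ := sSup (altSet b l)

lemma isAltFrom_nil (b : Bool) : IsAltFrom b ([] : List α) := by cases b <;> trivial

lemma isAltFrom_singleton (b : Bool) (x : α) : IsAltFrom b [x] := by cases b <;> trivial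

lemma isAltFrom_tail {b : Bool} {x : α} {s : List α} (h : IsAltFrom b (x :: s)) :
    IsAltFrom (!b) s := by
  cases s with
  | nil => exact isAltFrom_nil _
  | cons y t => cases b <;> exact h.2

lemma isAltFrom_cons_true {a : α} {s : List α} (h : IsAltFrom false s)
    (hh : ∀ y t, s = y :: t → y < a) : IsAltFrom true (a :: s) := by
  cases s with
  | nil => exact isAltFrom_singleton _ _
  | cons y t => exact ⟨hh y t rfl, h⟩

lemma isAltFrom_cons_false {a : α} {s : List α} (h : IsAltFrom true s)
    (hh : ∀ y t, s = y :: t → a < y) : IsAltFrom false (a :: s) := by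
  cases s with
  | nil => exact isAltFrom_singleton _ _
  | cons y t => exact ⟨hh y t rfl, h⟩

lemma isAltFrom_replace_false {x c : α} {rest : List α}
    (h : IsAltFrom false (x :: rest)) (hc : c < x) : IsAltFrom false (c :: rest) := by
  cases rest with
  | nil => exact isAltFrom_singleton _ _
  | cons y t => exact ⟨hc.trans h.1, h.2⟩

lemma isAltFrom_replace_true {x c : α} {rest : List α}
    (h : IsAltFrom true (x :: rest)) (hc : x < c) : IsAltFrom true (c :: rest) := by
  cases rest with
  | nil => exact isAltFrom_singleton _ _
  | cons y t => exact ⟨h.1.trans hc, h.2⟩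

lemma altSet_bddAbove (b : Bool) (l : List α) : BddAbove (altSet b l) := by
  refine ⟨l.length, fun k hk => ?_⟩
  obtain ⟨s, hs, -, rfl⟩ := hk
  exact hs.length_le

lemma zero_mem_altSet (b : Bool) (l : List α) : 0 ∈ altSet b l :=
  ⟨[], List.nil_sublist _, isAltFrom_nil _, rfl⟩

lemma le_altM {b : Bool} {l : List α} {k : ℕ} (h : k ∈ altSet b l) : k ≤ altM b l :=
  le_csSup (altSet_bddAbove b l) h

lemma altM_mem (b : Bool) (l : List α) : altM b l ∈ altSet b l :=
  Nat.sSup_mem ⟨0, zero_mem_altSet b l⟩ (altSet_bddAbove b l)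

lemma altM_le {b : Bool} {l : List α} {m : ℕ}
    (h : ∀ s : List α, s.Sublist l → IsAltFrom b s → s.length ≤ m) : altM b l ≤ m :=
  csSup_le ⟨0, zero_mem_altSet b l⟩ (by rintro k ⟨s, hs, ha, rfl⟩; exact h s hs ha)

lemma one_le_altM {b : Bool} {x : α} {l : List α} : 1 ≤ altM b (x :: l) :=
  le_altM ⟨[x], (List.nil_sublist l).cons₂ x, isAltFrom_singleton _ _, rfl⟩

end AuxAlt

section Rec
variable {α : Type*} [LinearOrder α]

lemma R2 {a b : α} {r : List α} (hab : b < a) :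
    altM false (a :: b :: r) = altM false (b :: r) := by
  apply le_antisymm
  · apply altM_le
    intro s hs halt
    rcases List.sublist_cons_iff.mp hs with h | ⟨t, rfl, ht⟩
    · exact le_altM ⟨s, h, halt, rfl⟩
    · cases t with
      | nil => exact one_le_altM
      | cons x t2 =>
        rcases List.sublist_cons_iff.mp ht with h2 | ⟨t3, heq, ht3⟩
        · have hx : a < x := halt.1
          have : IsAltFrom false (b :: x :: t2) :=
            ⟨hab.trans hx, isAltFrom_tail halt⟩
          exact le_altM ⟨b :: x :: t2, (h2.cons₂ b), this, by simp⟩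
        · have hxb : x = b := (List.cons.injEq .. ▸ heq).1
          exact absurd (hxb ▸ halt.1) (not_lt.mpr hab.le)
  · apply altM_le
    intro s hs halt
    exact le_altM ⟨s, List.sublist_cons_of_sublist a hs, halt, rfl⟩

lemma R4 {a b : α} {r : List α} (hab : a < b) :
    altM true (a :: b :: r) = altM true (b :: r) := by
  apply le_antisymm
  · apply altM_le
    intro s hs halt
    rcases List.sublist_cons_iff.mp hs with h | ⟨t, rfl, ht⟩
    · exact le_altM ⟨s, h, halt, rfl⟩
    · cases t with
      | nil => exact one_le_altM
      | cons x t2 =>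
        rcases List.sublist_cons_iff.mp ht with h2 | ⟨t3, heq, ht3⟩
        · have hx : x < a := halt.1
          have : IsAltFrom true (b :: x :: t2) :=
            ⟨hx.trans hab, isAltFrom_tail halt⟩
          exact le_altM ⟨b :: x :: t2, (h2.cons₂ b), this, by simp⟩
        · have hxb : x = b := (List.cons.injEq .. ▸ heq).1
          exact absurd (hxb ▸ halt.1) (not_lt.mpr hab.le)
  · apply altM_le
    intro s hs halt
    exact le_altM ⟨s, List.sublist_cons_of_sublist a hs, halt, rfl⟩

lemma R1 {a b : α} {r : List α} (hab : b < a) (ha : a ∉ r) :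
    altM true (a :: b :: r) = altM false (b :: r) + 1 := by
  apply le_antisymm
  · apply altM_le
    intro s hs halt
    rcases List.sublist_cons_iff.mp hs with h | ⟨t, rfl, ht⟩
    · cases s with
      | nil => simp
      | cons x rest =>
        have : rest.Sublist (b :: r) := (List.sublist_cons_self x rest).trans h
        have h2 : IsAltFrom false rest := isAltFrom_tail halt
        simpa using Nat.add_le_add_right (le_altM ⟨rest, this, h2, rfl⟩) 1
    · have h2 : IsAltFrom false t := isAltFrom_tail halt
      simpa using Nat.add_le_add_right (le_altM ⟨t, ht, h2, rfl⟩) 1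
  · obtain ⟨s, hs, halt, hlen⟩ := altM_mem false (b :: r)
    rcases List.sublist_cons_iff.mp hs with h | ⟨t, rfl, ht⟩
    · cases s with
      | nil =>
        rw [← hlen]
        exact le_altM ⟨[a], ((List.nil_sublist _).cons₂ a), isAltFrom_singleton _ _, rfl⟩
      | cons x rest =>
        have hxr : x ∈ r := h.subset List.mem_cons_self
        have hxa : x ≠ a := fun he => ha (he ▸ hxr)
        rcases hxa.lt_or_gt with hlt | hlt
        · -- x < a : take a :: x :: rest
          refine le_altM ⟨a :: x :: rest, ?_, ⟨hlt, halt⟩, by simp [← hlen]⟩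
          exact (List.sublist_cons_of_sublist b h).cons₂ a
        · -- a < x : take a :: b :: rest
          have hrest : rest.Sublist r := (List.sublist_cons_self x rest).trans h
          have hbx : IsAltFrom false (b :: rest) :=
            isAltFrom_replace_false halt (hab.trans hlt)
          refine le_altM ⟨a :: b :: rest, ((hrest.cons₂ b).cons₂ a), ⟨hab, hbx⟩, ?_⟩
          simp [← hlen]
    · refine le_altM ⟨a :: b :: t, ((ht.cons₂ b).cons₂ a), ⟨hab, halt⟩, by simp [← hlen]⟩

lemma R3 {a b : α} {r : List α} (hab : a < b) (ha : a ∉ r) :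
    altM false (a :: b :: r) = altM true (b :: r) + 1 := by
  apply le_antisymm
  · apply altM_le
    intro s hs halt
    rcases List.sublist_cons_iff.mp hs with h | ⟨t, rfl, ht⟩
    · cases s with
      | nil => simp
      | cons x rest =>
        have : rest.Sublist (b :: r) := (List.sublist_cons_self x rest).trans h
        have h2 : IsAltFrom true rest := isAltFrom_tail halt
        simpa using Nat.add_le_add_right (le_altM ⟨rest, this, h2, rfl⟩) 1
    · have h2 : IsAltFrom true t := isAltFrom_tail halt
      simpa using Nat.add_le_add_right (le_altM ⟨t, ht, h2, rfl⟩) 1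
  · obtain ⟨s, hs, halt, hlen⟩ := altM_mem true (b :: r)
    rcases List.sublist_cons_iff.mp hs with h | ⟨t, rfl, ht⟩
    · cases s with
      | nil =>
        rw [← hlen]
        exact le_altM ⟨[a], ((List.nil_sublist _).cons₂ a), isAltFrom_singleton _ _, rfl⟩
      | cons x rest =>
        have hxr : x ∈ r := h.subset List.mem_cons_self
        have hxa : x ≠ a := fun he => ha (he ▸ hxr)
        rcases hxa.lt_or_gt with hlt | hlt
        · -- x < a : take a :: b :: rest
          have hrest : rest.Sublist r := (List.sublist_cons_self x rest).trans h
          have hbx : IsAltFrom true (b :: rest) :=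
            isAltFrom_replace_true halt (hlt.trans hab)
          refine le_altM ⟨a :: b :: rest, ((hrest.cons₂ b).cons₂ a), ⟨hab, hbx⟩, ?_⟩
          simp [← hlen]
        · -- a < x : take a :: x :: rest
          refine le_altM ⟨a :: x :: rest, ?_, ⟨hlt, halt⟩, by simp [← hlen]⟩
          exact (List.sublist_cons_of_sublist b h).cons₂ a
    · refine le_altM ⟨a :: b :: t, ((ht.cons₂ b).cons₂ a), ⟨hab, halt⟩, by simp [← hlen]⟩

end Rec

section Main
variable {α : Type*} [LinearOrder α]

lemma altM_nil (b : Bool) : altM b ([] : List α) = 0 := by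
  refine le_antisymm (altM_le fun s hs _ => ?_) (Nat.zero_le _)
  simp [List.sublist_nil.mp hs]

lemma altM_singleton (b : Bool) (x : α) : altM b [x] = 1 := by
  refine le_antisymm (altM_le fun s hs _ => ?_) one_le_altM
  simpa using hs.length_le

lemma turns_cons_lt {a b : α} {r : List α} (hab : a < b) :
    turnsCount (a :: b :: r) = initDesc (b :: r) + turnsCount (b :: r) := by
  cases r with
  | nil => simp [turnsCount, initDesc]
  | cons c r' =>
    by_cases hc : c < b <;>
      simp [turnsCount, initDesc, hc, hab, not_lt.mpr hab.le]

lemma turns_cons_gt {a b : α} {r : List α} (hab : b < a) :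
    turnsCount (a :: b :: r) = initAsc (b :: r) + turnsCount (b :: r) := by
  cases r with
  | nil => simp [turnsCount, initAsc]
  | cons c r' =>
    by_cases hc : b < c <;>
      simp [turnsCount, initAsc, hc, hab, not_lt.mpr hab.le]

lemma altM_formula : ∀ (l : List α), l.Pairwise (· ≠ ·) → l ≠ [] →
    altM true l = initDesc l + turnsCount l + 1 ∧
      altM false l = initAsc l + turnsCount l + 1 := by
  intro l
  induction l with
  | nil => intro _ h; exact absurd rfl h
  | cons a l ih =>
    intro hp _
    cases l with
    | nil => simp [altM_singleton, initDesc, initAsc, turnsCount]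
    | cons b r =>
      have hab : a ≠ b := (List.pairwise_cons.mp hp).1 b List.mem_cons_self
      have har : a ∉ r := fun h =>
        (List.pairwise_cons.mp hp).1 a (List.mem_cons_of_mem b h) rfl
      obtain ⟨ih1, ih2⟩ := ih (List.pairwise_cons.mp hp).2 (by simp)
      rcases hab.lt_or_gt with hlt | hlt
      · have hd : initDesc (a :: b :: r) = 0 := by simp [initDesc, not_lt.mpr hlt.le]
        have ha' : initAsc (a :: b :: r) = 1 := by simp [initAsc, hlt]
        rw [R4 hlt, R3 hlt har, hd, ha', turns_cons_lt hlt, ih1]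
        omega
      · have hd : initDesc (a :: b :: r) = 1 := by simp [initDesc, hlt]
        have ha' : initAsc (a :: b :: r) = 0 := by simp [initAsc, not_lt.mpr hlt.le]
        rw [R1 hlt har, R2 hlt, hd, ha', turns_cons_gt hlt, ih2]
        omega

end Main


section Final
variable {α : Type*} [LinearOrder α]

lemma udr_eq_altM (l : List α) (hp : l.Pairwise (· ≠ ·)) : udrCount l = altM true l := by
  cases l with
  | nil => simp [udrCount, birunsCount, initDesc, altM_nil]
  | cons x t =>
    obtain ⟨h1, -⟩ := altM_formula (x :: t) hp (by simp)
    rw [h1]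
    simp [udrCount, birunsCount]
    omega

end Final

/-- the number of up-down runs of a permutation equals the length of its
longest alternating subsequence. -/
theorem udr_eq_longest_alternating_subsequence (n : ℕ) (π : Equiv.Perm (Fin n)) :
    udrP π = sSup {k : ℕ | ∃ l : List (Fin n),
      l.Sublist (List.ofFn ⇑π) ∧ IsAltFrom true l ∧ l.length = k} := by
  exact udr_eq_altM _ (List.nodup_ofFn.mpr π.injective)
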